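/- Multiplicative local slice theorem, part (a): Let Φ: R → R[t^{±1}] be a nontrivial G_m-coaction and s ∈ R_c a local slice of degree d with denominator c (a nonzero semi-invariant). Then the (R_c)^{G_m}-algebra homomorphism (R_c)^{G_m}[y^{±1}] → R_c from the Laurent polynomial ring sending y to s is an isomorphism. -/

import Mathlib

open LaurentPolynomial

def IsGmCoaction {R : Type*} [CommRing R] (Φ : R →+* LaurentPolynomial R) : Prop :=
  (∀ a : R, (Φ a).coeff.sum (fun _ r => r) = a) ∧
  (∀ a : R, Finsupp.mapRange ⇑Φ (map_zero Φ) (Φ a).coeff =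
    (Φ a).coeff.sum fun k r => Finsupp.single k (LaurentPolynomial.C r * LaurentPolynomial.T k))

/-- The invariant subring `A^{G_m} = ker(Φc - id)`. -/
noncomputable def invGmSubring {A : Type*} [CommRing A] (Φc : A →+* LaurentPolynomial A) :
    Subring A :=
  RingHom.eqLocus Φc (LaurentPolynomial.C : A →+* LaurentPolynomial A)

section Aux

lemma aux_sum_single_apply {M N : Type*} [Zero M] [AddCommMonoid N] (φ : ℤ →₀ M)
    (g : ℤ → M → N) (h : ∀ j, g j 0 = 0) (j : ℤ) :
    (φ.sum fun k x => Finsupp.single k (g k x)) j = g j (φ j) := by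
  classical
  rw [Finsupp.sum_apply]
  simp only [Finsupp.single_apply]
  rw [Finsupp.sum_ite_eq']
  split_ifs with hs
  · rfl
  · rw [Finsupp.notMem_support_iff.mp hs, h]

lemma aux_ringHom_sum_single {X : Type*} {Y : Type*} [Semiring X] [NonAssocSemiring Y]
    (G : LaurentPolynomial X →+* Y) (φ : LaurentPolynomial X) :
    G φ = φ.coeff.sum fun k x => G (AddMonoidAlgebra.single k x) := by
  conv_lhs => rw [← AddMonoidAlgebra.sum_coeff_single φ]
  exact map_finsuppSum G φ.coeff _

lemma aux_liftNCRingHom_single {X Y : Type*} [Semiring X] [Semiring Y] (f : X →+* Y)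
    (g : Multiplicative ℤ →* Y) (h : ∀ x y, Commute (f x) (g y)) (k : ℤ) (x : X) :
    AddMonoidAlgebra.liftNCRingHom f g h (AddMonoidAlgebra.single k x) =
      f x * g (Multiplicative.ofAdd k) :=
  AddMonoidAlgebra.liftNC_single _ _ _ _

/-- Sum of coefficients, as a ring hom. -/
noncomputable def epsHom (X : Type*) [CommSemiring X] : LaurentPolynomial X →+* X :=
  AddMonoidAlgebra.liftNCRingHom (RingHom.id X) 1 (fun _ _ => Commute.all _ _)

lemma epsHom_single {X : Type*} [CommSemiring X] (k : ℤ) (x : X) :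
    epsHom X (AddMonoidAlgebra.single k x) = x := by
  rw [epsHom, aux_liftNCRingHom_single]
  simp

lemma epsHom_apply {X : Type*} [CommSemiring X] (φ : LaurentPolynomial X) :
    epsHom X φ = φ.coeff.sum fun _ x => x := by
  conv_lhs => rw [← AddMonoidAlgebra.sum_coeff_single φ]
  rw [map_finsuppSum]
  exact Finsupp.sum_congr fun k _ => epsHom_single k (φ.coeff k)

/-- Coefficient-wise application of a ring hom, as a ring hom on Laurent polynomials. -/
noncomputable def coefHom {X Y : Type*} [CommSemiring X] [CommSemiring Y] (f : X →+* Y) :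
    LaurentPolynomial X →+* LaurentPolynomial Y :=
  AddMonoidAlgebra.liftNCRingHom (LaurentPolynomial.C.comp f)
    (AddMonoidAlgebra.of Y ℤ) (fun _ _ => Commute.all _ _)

lemma coefHom_single {X Y : Type*} [CommSemiring X] [CommSemiring Y] (f : X →+* Y)
    (k : ℤ) (x : X) : coefHom f (AddMonoidAlgebra.single k x) = AddMonoidAlgebra.single k (f x) := by
  rw [coefHom, aux_liftNCRingHom_single, AddMonoidAlgebra.of_apply, single_eq_C_mul_T]
  simp

/-- The "diagonal" ring hom `Σ r_k T^k ↦ Σ (C r_k T^k) T^k`. -/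
noncomputable def diagHom (X : Type*) [CommSemiring X] :
    LaurentPolynomial X →+* LaurentPolynomial (LaurentPolynomial X) :=
  AddMonoidAlgebra.liftNCRingHom (LaurentPolynomial.C.comp LaurentPolynomial.C)
    ({ toFun := fun k => LaurentPolynomial.C (T (Multiplicative.toAdd k)) *
        T (Multiplicative.toAdd k),
       map_one' := by simp,
       map_mul' := fun a b => by
         simp only [toAdd_mul, T_add, map_mul]
         ring } : Multiplicative ℤ →* LaurentPolynomial (LaurentPolynomial X))
    (fun _ _ => Commute.all _ _)

lemma diagHom_single {X : Type*} [CommSemiring X] (k : ℤ) (x : X) :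
    diagHom X (AddMonoidAlgebra.single k x) =
      AddMonoidAlgebra.single k (LaurentPolynomial.C x * T k) := by
  rw [diagHom, aux_liftNCRingHom_single]
  show LaurentPolynomial.C (LaurentPolynomial.C x) *
    (LaurentPolynomial.C (T k) * T k) = _
  rw [single_eq_C_mul_T, ← mul_assoc, ← map_mul]

lemma coefHom_coeff {X Y : Type*} [CommSemiring X] [CommSemiring Y] (f : X →+* Y)
    (φ : LaurentPolynomial X) (j : ℤ) : (coefHom f φ).coeff j = f (φ.coeff j) := by
  rw [aux_ringHom_sum_single (coefHom f) φ]
  have h1 : (φ.coeff.sum fun k x => coefHom f (AddMonoidAlgebra.single k x)) =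
      φ.coeff.sum fun k x => AddMonoidAlgebra.single k (f x) :=
    Finsupp.sum_congr (fun k _ => coefHom_single f k (φ.coeff k))
  rw [h1, AddMonoidAlgebra.coeff_finsuppSum]
  exact aux_sum_single_apply φ.coeff (fun _ x => f x) (fun _ => map_zero f) j

lemma diagHom_coeff {X : Type*} [CommSemiring X] (φ : LaurentPolynomial X) (j : ℤ) :
    (diagHom X φ).coeff j = LaurentPolynomial.C (φ.coeff j) * T j := by
  rw [aux_ringHom_sum_single (diagHom X) φ]
  have h1 : (φ.coeff.sum fun k x => diagHom X (AddMonoidAlgebra.single k x)) =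
      φ.coeff.sum fun k x => AddMonoidAlgebra.single k (LaurentPolynomial.C x * T k) :=
    Finsupp.sum_congr (fun k _ => diagHom_single k (φ.coeff k))
  rw [h1, AddMonoidAlgebra.coeff_finsuppSum]
  exact aux_sum_single_apply φ.coeff (fun k x => LaurentPolynomial.C x * T k) (fun j => by simp) j

end Aux

/-- multiplicative local slice theorem, part (a): if `s ∈ R_c` is a local
slice of degree `d` with denominator the nonzero semi-invariant `c`, then the
`(R_c)^{G_m}`-algebra homomorphism `(R_c)^{G_m}[y^{±1}] → R_c` from the Laurent
polynomial ring sending `y` to `s` (here written out on a Laurent polynomial `p` as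
`Σ_k p_k s^k`) is an isomorphism. -/
theorem stmt13 {K R : Type*} [CommRing K] [CommRing R] [Algebra K R]
    (Φ : R →ₐ[K] LaurentPolynomial R) (hΦ : IsGmCoaction Φ.toRingHom)
    (c : R) (hc : c ≠ 0) (w : ℤ) (hw : Φ c = LaurentPolynomial.C c * LaurentPolynomial.T w)
    (Φc : Localization.Away c →+* LaurentPolynomial (Localization.Away c))
    (hext : ∀ r : R, (Φc (algebraMap R (Localization.Away c) r)).coeff =
      Finsupp.mapRange (algebraMap R (Localization.Away c))
        (map_zero (algebraMap R (Localization.Away c))) (Φ r).coeff)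
    (d : ℤ) (hd : 0 < d)
    (u : (Localization.Away c)ˣ) (s : Localization.Away c) (hu : (u : Localization.Away c) = s)
    (hsemi : Φc s = LaurentPolynomial.C s * LaurentPolynomial.T (-d))
    (hslice : ∀ a : Localization.Away c,
      (∀ k : ℤ, d ≤ |k| → (Φc a).coeff k = 0) → Φc a = LaurentPolynomial.C a) :
    Function.Bijective
      (fun p : LaurentPolynomial (invGmSubring Φc) =>
        p.coeff.sum fun k r => ((r : Localization.Away c)) * ((u ^ k : (Localization.Away c)ˣ) :
          Localization.Away c)) := by
  classical
  subst hu
  set A := Localization.Away c with hA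
  set alg := algebraMap R A with halg
  set Cc := (LaurentPolynomial.C : A →+* LaurentPolynomial A) with hCc
  obtain ⟨hΦ1, hΦ2⟩ := hΦ
  simp only [AlgHom.toRingHom_eq_coe, RingHom.coe_coe] at hΦ1 hΦ2
  -- extension rewritten through `coefHom`
  have hcoef_mapRange : ∀ ψ : LaurentPolynomial R,
      (coefHom alg ψ).coeff = Finsupp.mapRange alg (map_zero alg) ψ.coeff := fun ψ =>
    Finsupp.ext fun j => by rw [coefHom_coeff, Finsupp.mapRange_apply]
  have hext' : ∀ r : R, Φc (alg r) = coefHom alg (Φ r) := fun r => AddMonoidAlgebra.ext (by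
    rw [hext r, hcoef_mapRange])
  -- counit on the image of R
  have hcim : ∀ r : R, epsHom A (Φc (alg r)) = alg r := by
    intro r
    rw [hext' r, epsHom_apply, hcoef_mapRange,
      Finsupp.sum_mapRange_index (fun _ => rfl), ← map_finsuppSum alg (Φ r).coeff fun _ x => x]
    exact congrArg alg (hΦ1 r)
  -- counit on all of A
  have counit : ∀ a : A, epsHom A (Φc a) = a := by
    intro a
    obtain ⟨⟨r, m⟩, hm⟩ := IsLocalization.surj (Submonoid.powers c) a
    have hum : IsUnit (alg ↑m) := IsLocalization.map_units A m
    refine hum.mul_right_cancel ?_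
    calc epsHom A (Φc a) * alg ↑m
        = epsHom A (Φc a) * epsHom A (Φc (alg ↑m)) := by rw [hcim]
      _ = epsHom A (Φc (a * alg ↑m)) := by rw [← map_mul, ← map_mul]
      _ = alg r := by rw [hm, hcim]
      _ = a * alg ↑m := hm.symm
  -- product of monomials
  have hCT : ∀ (x y : A) (n m : ℤ), (Cc x * T n) * (Cc y * T m) = Cc (x * y) * T (n + m) := by
    intro x y n m
    rw [T_add, map_mul]
    ring
  -- inverse of a semi-invariant unit
  have hinv : ∀ (x : Aˣ) (m : ℤ), Φc ↑x = Cc ↑x * T m → Φc ↑x⁻¹ = Cc ↑x⁻¹ * T (-m) := by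
    intro x m h
    have h1 : Φc ↑x * Φc ↑x⁻¹ = 1 := by rw [← map_mul, Units.mul_inv, map_one]
    have h2 : Φc ↑x * (Cc ↑x⁻¹ * T (-m)) = 1 := by
      rw [h, hCT, add_neg_cancel, T_zero, mul_one, Units.mul_inv, map_one]
    calc Φc ↑x⁻¹ = Φc ↑x⁻¹ * (Φc ↑x * (Cc ↑x⁻¹ * T (-m))) := by rw [h2, mul_one]
      _ = (Φc ↑x * Φc ↑x⁻¹) * (Cc ↑x⁻¹ * T (-m)) := by ring
      _ = Cc ↑x⁻¹ * T (-m) := by rw [h1, one_mul]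
  -- semi-invariance of the powers of u
  have hupow : ∀ n : ℤ, Φc ↑(u ^ n) = Cc ↑(u ^ n) * T (-(n * d)) := by
    have hinvu : Φc ↑u⁻¹ = Cc ↑u⁻¹ * T d := by
      have := hinv u (-d) hsemi
      rwa [neg_neg] at this
    intro n
    induction n using Int.induction_on with
    | zero => simp
    | succ n ih =>
      have hz : (u ^ ((n : ℤ) + 1)) = u ^ (n : ℤ) * u := zpow_add_one u n
      have he : (-((n : ℤ) * d)) + -d = -(((n : ℤ) + 1) * d) := by ring
      rw [hz, Units.val_mul, map_mul, ih, hsemi, hCT, he]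
    | pred n ih =>
      have hz : (u ^ (-(n : ℤ) - 1)) = u ^ (-(n : ℤ)) * u⁻¹ := zpow_sub_one u _
      have he : (-(-(n : ℤ) * d)) + d = -((-(n : ℤ) - 1) * d) := by ring
      rw [hz, Units.val_mul, map_mul, ih, hinvu, hCT, he]
  -- the coassociativity property P
  have hP : ∀ (a : A) (k : ℤ), Φc ((Φc a).coeff k) = Cc ((Φc a).coeff k) * T k := by
    have hEall : ∀ a : A, diagHom A (Φc a) = coefHom Φc (Φc a) := by
      set E := RingHom.eqLocus ((diagHom A).comp Φc) ((coefHom Φc).comp Φc) with hE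
      have hmemE : ∀ a : A, a ∈ E ↔ diagHom A (Φc a) = coefHom Φc (Φc a) := fun a => Iff.rfl
      have hsemiE : ∀ (b : A) (m : ℤ), Φc b = Cc b * T m → b ∈ E := by
        intro b m hb
        rw [hmemE]
        rw [hb, ← single_eq_C_mul_T, diagHom_single, coefHom_single, hb, single_eq_C_mul_T]
      have hr : ∀ r : R, alg r ∈ E := by
        intro r
        rw [hmemE]
        refine AddMonoidAlgebra.ext (Finsupp.ext fun j => ?_)
        rw [diagHom_coeff, coefHom_coeff]
        have hRj : Φ ((Φ r).coeff j) = LaurentPolynomial.C ((Φ r).coeff j) * T j := by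
          have h2 := congrArg (fun ψ : ℤ →₀ LaurentPolynomial R => ψ j) (hΦ2 r)
          rwa [Finsupp.mapRange_apply,
            aux_sum_single_apply _ _ (fun j => by simp) j] at h2
        have hcj : (Φc (alg r)).coeff j = alg ((Φ r).coeff j) := by
          rw [hext' r, coefHom_coeff]
        rw [hcj, hext', hRj, ← single_eq_C_mul_T, ← single_eq_C_mul_T, coefHom_single]
      intro a
      rw [← hmemE]
      obtain ⟨⟨r, m⟩, hm⟩ := IsLocalization.surj (Submonoid.powers c) a
      obtain ⟨v, hv⟩ := (IsLocalization.map_units A m : IsUnit (alg ↑m))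
      obtain ⟨n, hn⟩ := m.2
      have hvsemi : Φc ↑v = Cc ↑v * T ((n : ℤ) * w) := by
        have hac : Φc (alg c) = Cc (alg c) * T w := by
          rw [hext' c, hw, ← single_eq_C_mul_T, coefHom_single, single_eq_C_mul_T]
        have : (↑v : A) = (alg c) ^ n := by rw [hv, ← hn, map_pow]
        rw [this, map_pow, hac, mul_pow, ← map_pow, T_pow]
      have ha : alg r * ↑v⁻¹ = a := by
        rw [← hm, ← hv, Units.mul_inv_cancel_right]
      rw [← ha]
      exact mul_mem (hr r) (hsemiE _ _ (hinv v ((n : ℤ) * w) hvsemi))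
    intro a k
    have h := congrArg (fun ψ : LaurentPolynomial (LaurentPolynomial A) => ψ.coeff k) (hEall a)
    rwa [diagHom_coeff, coefHom_coeff, eq_comm] at h
  -- coefficients at non-multiples of d vanish
  have hzero : ∀ (b : A) (k : ℤ), Φc b = Cc b * T k → ¬(d ∣ k) → b = 0 := by
    intro b k hb hk
    have hd0 : d ≠ 0 := hd.ne'
    have hrlt : k % d < d := Int.emod_lt_of_pos k hd
    have hrge : 0 ≤ k % d := Int.emod_nonneg k hd0
    have hrne : k % d ≠ 0 := fun h => hk (Int.dvd_of_emod_eq_zero h)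
    set b' := b * ↑(u ^ (k / d)) with hb'
    have hsb' : Φc b' = Cc b' * T (k % d) := by
      have : k + -(k / d * d) = k % d := by rw [Int.emod_def]; ring
      rw [hb', map_mul, hb, hupow, hCT, this]
    have hb'0 : b' = 0 := by
      have hC : Φc b' = Cc b' := by
        apply hslice
        intro j hj
        rw [hsb', ← single_eq_C_mul_T, AddMonoidAlgebra.coeff_single, Finsupp.single_apply]
        split_ifs with hjj
        · exfalso
          rw [← hjj] at hj
          rw [abs_of_nonneg hrge] at hj
          omega
        · rfl
      have := hsb'.symm.trans hC
      have h0 := congrArg (fun ψ : LaurentPolynomial A => ψ.coeff (0 : ℤ)) this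
      rwa [← single_eq_C_mul_T, AddMonoidAlgebra.coeff_single, Finsupp.single_apply, if_neg hrne, eq_comm,
        show (Cc b').coeff (0 : ℤ) = b' from by
          rw [hCc, ← single_eq_C, AddMonoidAlgebra.coeff_single, Finsupp.single_apply, if_pos rfl]] at h0
    have : b * ↑(u ^ (k / d)) * ↑(u ^ (k / d))⁻¹ = 0 := by rw [← hb', hb'0, zero_mul]
    rwa [Units.mul_inv_cancel_right] at this
  -- the invariant subring
  set B := invGmSubring Φc with hB
  have hmemB : ∀ x : A, x ∈ B ↔ Φc x = Cc x := fun x => Iff.rfl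
  set F := (fun p : LaurentPolynomial B =>
      p.coeff.sum fun k r => ((r : A)) * ((u ^ k : Aˣ) : A)) with hF
  have hFsingle : ∀ (n : ℤ) (r : B), F (AddMonoidAlgebra.single n r) = (r : A) * ↑(u ^ n) := by
    intro n r
    rw [hF]
    exact Finsupp.sum_single_index (by rw [ZeroMemClass.coe_zero, zero_mul])
  have hΦF : ∀ p : LaurentPolynomial B,
      Φc (F p) = p.coeff.sum fun k r => AddMonoidAlgebra.single (-(k * d)) ((r : A) * ↑(u ^ k)) := by
    intro p
    rw [hF, map_finsuppSum]
    refine Finsupp.sum_congr fun k _ => ?_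
    rw [map_mul, (hmemB _).mp (p.coeff k).2, hupow, ← mul_assoc, ← map_mul, single_eq_C_mul_T]
  have hcoeff : ∀ (p : LaurentPolynomial B) (k : ℤ),
      (Φc (F p)).coeff (-(k * d)) = ((p.coeff k : A)) * ↑(u ^ k) := by
    intro p k
    rw [hΦF, AddMonoidAlgebra.coeff_finsuppSum, Finsupp.sum_apply]
    have h1 : (p.coeff.sum fun j r => (AddMonoidAlgebra.single (-(j * d)) ((r : A) * ↑(u ^ j))).coeff (-(k * d))) =
        p.coeff.sum fun j r => if j = k then (r : A) * ↑(u ^ j) else 0 := by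
      refine Finsupp.sum_congr fun j _ => ?_
      rw [AddMonoidAlgebra.coeff_single, Finsupp.single_apply]
      congr 1
      simp only [eq_iff_iff]
      constructor
      · intro h
        have := neg_injective h
        exact mul_right_cancel₀ hd.ne' this
      · intro h; rw [h]
    rw [h1, Finsupp.sum_ite_eq' p.coeff k]
    split_ifs with hs
    · rfl
    · rw [Finsupp.notMem_support_iff.mp hs, ZeroMemClass.coe_zero, zero_mul]
  constructor
  · -- injectivity
    intro p q h
    have h' : Φc (F p) = Φc (F q) := by rw [hF] at h ⊢; exact congrArg Φc h
    ext k
    have h2 : ((p.coeff k : A)) * ↑(u ^ k) = ((q.coeff k : A)) * ↑(u ^ k) := by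
      rw [← hcoeff p k, ← hcoeff q k, h']
    have h3 : ((p.coeff k : A)) * ↑(u ^ k) * ↑(u ^ k)⁻¹ = ((q.coeff k : A)) * ↑(u ^ k) * ↑(u ^ k)⁻¹ := by
      rw [h2]
    rw [Units.mul_inv_cancel_right, Units.mul_inv_cancel_right] at h3
    exact h3
  · -- surjectivity
    intro a
    have hdvd : ∀ k : ℤ, ¬(d ∣ k) → (Φc a).coeff k = 0 := fun k hk => hzero _ k (hP a k) hk
    have hmem : ∀ k : ℤ, (Φc a).coeff k * ↑(u ^ (k / d)) ∈ B := by
      intro k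
      by_cases hk : d ∣ k
      · rw [hmemB, map_mul, hP a k, hupow, hCT]
        have : k + -(k / d * d) = 0 := by
          rw [Int.ediv_mul_cancel hk]; ring
        rw [this, T_zero, mul_one]
      · rw [hdvd k hk, zero_mul]
        exact zero_mem B
    refine ⟨(Φc a).coeff.sum fun k _ =>
      AddMonoidAlgebra.single (-(k / d)) (⟨(Φc a).coeff k * ↑(u ^ (k / d)), hmem k⟩ : B), ?_⟩
    show ((Φc a).coeff.sum fun k _ =>
        AddMonoidAlgebra.single (-(k / d)) (⟨(Φc a).coeff k * ↑(u ^ (k / d)), hmem k⟩ : B)).coeff.sum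
        (fun k (r : B) => (r : A) * ↑(u ^ k)) = a
    have hz0 : ∀ j : ℤ, (((0 : B) : A)) * ↑(u ^ j) = 0 := fun j => by
      rw [ZeroMemClass.coe_zero, zero_mul]
    have hadd : ∀ (j : ℤ) (x y : B), (((x + y : B) : A)) * ↑(u ^ j) =
        ((x : A)) * ↑(u ^ j) + ((y : A)) * ↑(u ^ j) := fun j x y => by
      rw [AddMemClass.coe_add, add_mul]
    rw [AddMonoidAlgebra.coeff_finsuppSum, Finsupp.sum_sum_index (h := fun (j : ℤ) (r : B) => (r : A) * ↑(u ^ j)) hz0 hadd]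
    have h1 : ((Φc a).coeff.sum fun k _ =>
        (AddMonoidAlgebra.single (-(k / d)) (⟨(Φc a).coeff k * ↑(u ^ (k / d)), hmem k⟩ : B)).coeff.sum
          fun j (r : B) => (r : A) * ↑(u ^ j)) = (Φc a).coeff.sum fun k x => x := by
      refine Finsupp.sum_congr fun k _ => ?_
      rw [AddMonoidAlgebra.coeff_single, Finsupp.sum_single_index (hz0 _)]
      show (Φc a).coeff k * ↑(u ^ (k / d)) * ↑(u ^ (-(k / d))) = (Φc a).coeff k
      rw [mul_assoc, ← Units.val_mul, ← zpow_add, add_neg_cancel, zpow_zero, Units.val_one,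
        mul_one]
    rw [h1, ← epsHom_apply, counit]
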